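/- (Range-based extension of RRPB) Fix γ ∈ (0,1], a finite index set T, symmetric matrices H_t ∈ ℝ^{d×d} (t ∈ T), λ₀ > 0, and one index with matrix H := H_t, H ≠ O. Let M₀* be optimal for λ₀ (M₀* ⪰ O minimizes P_{λ₀} over positive semi-definite matrices), and let M₀ be a symmetric matrix with ‖M₀* − M₀‖_F ≤ ε for some ε ≥ 0. Assume ⟨H, M₀⟩ − 2 + ‖H‖_F‖M₀‖_F > 0. Define λ_a := λ₀(‖M₀‖_F‖H‖_F − ⟨H, M₀⟩ + 2ε‖H‖_F)/(⟨H, M₀⟩ − 2 + ‖H‖_F‖M₀‖_F) and λ_b := λ₀(‖M₀‖_F‖H‖_F + ⟨H, M₀⟩)/(‖H‖_F‖M₀‖_F − ⟨H, M₀⟩ + 2 + 2ε‖H‖_F). Then for every λ > 0 with either λ_a < λ ≤ λ₀ or λ₀ ≤ λ < λ_b, every M_λ* optimal for λ satisfies ⟨H, M_λ*⟩ > 1 (i.e., the triplet belongs to R* for all such λ). -/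

import Mathlib

open scoped BigOperators
open scoped Matrix

/-- Frobenius inner product ⟨A,B⟩ = tr(Aᵀ B). -/
noncomputable def frob {d : ℕ} (A B : Matrix (Fin d) (Fin d) ℝ) : ℝ :=
  Matrix.trace (Aᵀ * B)

/-- Frobenius norm ‖A‖_F = √⟨A,A⟩. -/
noncomputable def frobNorm {d : ℕ} (A : Matrix (Fin d) (Fin d) ℝ) : ℝ :=
  Real.sqrt (frob A A)

/-- Smoothed hinge loss ℓ_γ. -/
noncomputable def shinge (γ x : ℝ) : ℝ :=
  if 1 < x then 0 else if 1 - γ ≤ x then (1 - x) ^ 2 / (2 * γ) else 1 - x - γ / 2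

/-- Derivative of the smoothed hinge loss ℓ_γ'. -/
noncomputable def shinge' (γ x : ℝ) : ℝ :=
  if 1 < x then 0 else if 1 - γ ≤ x then -(1 - x) / γ else -1

/-- Primal objective P_λ(M) = Σ_t ℓ_γ(⟨M,H_t⟩) + (λ/2)‖M‖_F². -/
noncomputable def Pobj {d : ℕ} {ι : Type*} (γ lam : ℝ) (T : Finset ι)
    (H : ι → Matrix (Fin d) (Fin d) ℝ) (M : Matrix (Fin d) (Fin d) ℝ) : ℝ :=
  (∑ t ∈ T, shinge γ (frob M (H t))) + lam / 2 * frobNorm M ^ 2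

/-- Gradient ∇P_λ(M) = Σ_t ℓ_γ'(⟨M,H_t⟩) H_t + λ M. -/
noncomputable def gradP {d : ℕ} {ι : Type*} (γ lam : ℝ) (T : Finset ι)
    (H : ι → Matrix (Fin d) (Fin d) ℝ) (M : Matrix (Fin d) (Fin d) ℝ) :
    Matrix (Fin d) (Fin d) ℝ :=
  (∑ t ∈ T, shinge' γ (frob M (H t)) • H t) + lam • M

/-! ### Auxiliary material -/

/-- Embedding of matrices into Euclidean space. -/
noncomputable def emb {d : ℕ} (M : Matrix (Fin d) (Fin d) ℝ) :
    EuclideanSpace ℝ (Fin d × Fin d) := WithLp.toLp 2 (fun p : Fin d × Fin d => M p.1 p.2)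

lemma emb_sub {d : ℕ} (A B : Matrix (Fin d) (Fin d) ℝ) : emb (A - B) = emb A - emb B := rfl
lemma emb_add {d : ℕ} (A B : Matrix (Fin d) (Fin d) ℝ) : emb (A + B) = emb A + emb B := rfl
lemma emb_smul {d : ℕ} (c : ℝ) (A : Matrix (Fin d) (Fin d) ℝ) : emb (c • A) = c • emb A := rfl

lemma frob_eq {d : ℕ} (A B : Matrix (Fin d) (Fin d) ℝ) :
    frob A B = inner ℝ (emb A) (emb B) := by
  simp [frob, Matrix.trace, Matrix.mul_apply, Matrix.transpose_apply, Matrix.diag,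
    PiLp.inner_apply, RCLike.inner_apply, emb, Fintype.sum_prod_type, mul_comm]
  exact Finset.sum_comm

lemma frobNorm_eq {d : ℕ} (A : Matrix (Fin d) (Fin d) ℝ) :
    frobNorm A = ‖emb A‖ := by
  rw [frobNorm, frob_eq, real_inner_self_eq_norm_mul_norm,
    Real.sqrt_mul_self (norm_nonneg _)]

lemma posq_hasDerivAt (x : ℝ) : HasDerivAt (fun y : ℝ => max 0 y ^ 2) (2 * max 0 x) x := by
  rcases lt_trichotomy x 0 with hx | rfl | hx
  · have h : HasDerivAt (fun _ : ℝ => (0:ℝ)) 0 x := hasDerivAt_const x 0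
    have h2 : (2 : ℝ) * max 0 x = 0 := by rw [max_eq_left hx.le]; ring
    rw [h2]
    refine h.congr_of_eventuallyEq ?_
    filter_upwards [Iio_mem_nhds hx] with y hy
    simp [max_eq_left (le_of_lt (Set.mem_Iio.mp hy))]
  · have h2 : (2 : ℝ) * max 0 0 = 0 := by simp
    rw [h2, hasDerivAt_iff_isLittleO]
    simp only [sub_zero, max_self, ne_eq, OfNat.ofNat_ne_zero, not_false_eq_true,
      zero_pow, mul_zero, sub_zero, smul_eq_mul, zero_mul]
    rw [Asymptotics.isLittleO_iff]
    intro c hc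
    filter_upwards [Metric.ball_mem_nhds (0:ℝ) hc] with y hy
    have hy' : |y| < c := by simpa [Real.dist_eq] using hy
    have h1 : max 0 y ^ 2 ≤ |y| * |y| := by
      rcases le_total y 0 with h | h
      · rw [max_eq_left h]; simpa using mul_nonneg (abs_nonneg y) (abs_nonneg y)
      · rw [max_eq_right h, abs_of_nonneg h]; nlinarith
    have : ‖max 0 y ^ 2‖ ≤ c * ‖y‖ := by
      rw [Real.norm_eq_abs, Real.norm_eq_abs, abs_of_nonneg (by positivity : (0:ℝ) ≤ max 0 y ^ 2)]
      calc max 0 y ^ 2 ≤ |y| * |y| := h1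
        _ ≤ c * |y| := by nlinarith [abs_nonneg y]
    exact this
  · have h : HasDerivAt (fun y : ℝ => y ^ 2) (2 * x) x := by
      simpa using hasDerivAt_pow 2 x
    have h2 : (2 : ℝ) * max 0 x = 2 * x := by rw [max_eq_right hx.le]
    rw [h2]
    refine h.congr_of_eventuallyEq ?_
    filter_upwards [Ioi_mem_nhds hx] with y hy
    simp [max_eq_right (le_of_lt (Set.mem_Ioi.mp hy))]

lemma shinge_eq (γ : ℝ) (hγ : 0 < γ) (x : ℝ) :
    shinge γ x = (max 0 (1 - x) ^ 2 - max 0 (1 - γ - x) ^ 2) / (2 * γ) := by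
  unfold shinge
  split_ifs with h1 h2
  · rw [max_eq_left (by linarith), max_eq_left (by linarith)]; simp
  · rw [max_eq_right (by linarith), max_eq_left (by linarith)]
    simp
  · rw [max_eq_right (by linarith), max_eq_right (by push_neg at h2; linarith)]
    field_simp
    ring

lemma shinge'_eq (γ : ℝ) (hγ : 0 < γ) (x : ℝ) :
    shinge' γ x = -(min γ (max 0 (1 - x))) / γ := by
  unfold shinge'
  split_ifs with h1 h2
  · rw [max_eq_left (by linarith), min_eq_right hγ.le]; simp
  · rw [max_eq_right (by linarith), min_eq_right (by linarith)]
  · rw [max_eq_right (by push_neg at h2; linarith), min_eq_left (by push_neg at h2; linarith)]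
    field_simp

lemma shinge_hasDerivAt (γ : ℝ) (hγ : 0 < γ) (x : ℝ) :
    HasDerivAt (shinge γ) (shinge' γ x) x := by
  have h1 : HasDerivAt (fun y : ℝ => max 0 (1 - y) ^ 2) (-(2 * max 0 (1 - x))) x := by
    have := (posq_hasDerivAt (1 - x)).comp x ((hasDerivAt_const x (1:ℝ)).sub (hasDerivAt_id x))
    simpa [Function.comp_def] using this
  have h2 : HasDerivAt (fun y : ℝ => max 0 (1 - γ - y) ^ 2) (-(2 * max 0 (1 - γ - x))) x := by
    have := (posq_hasDerivAt (1 - γ - x)).comp x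
      ((hasDerivAt_const x (1 - γ)).sub (hasDerivAt_id x))
    simpa [Function.comp_def] using this
  have h3 : HasDerivAt (fun y : ℝ => (max 0 (1 - y) ^ 2 - max 0 (1 - γ - y) ^ 2) / (2 * γ))
      ((-(2 * max 0 (1 - x)) - -(2 * max 0 (1 - γ - x))) / (2 * γ)) x :=
    (h1.sub h2).div_const _
  have heq : (fun y : ℝ => (max 0 (1 - y) ^ 2 - max 0 (1 - γ - y) ^ 2) / (2 * γ)) = shinge γ := by
    funext y; rw [shinge_eq γ hγ]
  rw [heq] at h3
  convert h3 using 1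
  rw [shinge'_eq γ hγ]
  have key : max 0 (1 - x) - max 0 (1 - γ - x) = min γ (max 0 (1 - x)) := by
    rcases le_total (1 - x) 0 with h | h
    · rw [max_eq_left h, max_eq_left (by linarith), min_eq_right (by linarith)]; ring
    · rcases le_total (1 - x) γ with h' | h'
      · rw [max_eq_right h, max_eq_left (by linarith), min_eq_right (by linarith)]; ring
      · rw [max_eq_right h, max_eq_right (by linarith), min_eq_left (by linarith)]; ring
  rw [← key]
  ring

lemma shinge'_mono (γ : ℝ) (hγ : 0 < γ) : Monotone (shinge' γ) := by
  intro x y hxy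
  rw [shinge'_eq γ hγ, shinge'_eq γ hγ]
  have h : min γ (max 0 (1 - y)) ≤ min γ (max 0 (1 - x)) :=
    min_le_min le_rfl (max_le_max le_rfl (by linarith))
  have h2 := mul_le_mul_of_nonneg_right (neg_le_neg h) (inv_nonneg.mpr hγ.le)
  simpa [div_eq_mul_inv] using h2

lemma shinge_convex (γ : ℝ) (hγ : 0 < γ) : ConvexOn ℝ Set.univ (shinge γ) := by
  have hd : Differentiable ℝ (shinge γ) := fun x => (shinge_hasDerivAt γ hγ x).differentiableAt
  have hderiv : deriv (shinge γ) = shinge' γ := funext fun x => (shinge_hasDerivAt γ hγ x).deriv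
  exact Monotone.convexOn_univ_of_deriv hd (hderiv ▸ shinge'_mono γ hγ)

lemma psd_smul {d : ℕ} {A : Matrix (Fin d) (Fin d) ℝ} (hA : A.PosSemidef) {c : ℝ}
    (hc : 0 ≤ c) : (c • A).PosSemidef := by
  rw [Matrix.posSemidef_iff_dotProduct_mulVec]
  constructor
  · unfold Matrix.IsHermitian
    rw [Matrix.conjTranspose_smul, hA.1]
    norm_num
  · intro x
    rw [Matrix.smul_mulVec, dotProduct_smul]
    exact mul_nonneg hc (hA.dotProduct_mulVec_nonneg x)

lemma psd_combo {d : ℕ} {A B : Matrix (Fin d) (Fin d) ℝ} (hA : A.PosSemidef)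
    (hB : B.PosSemidef) {t : ℝ} (h0 : 0 ≤ t) (h1 : t ≤ 1) :
    ((1 - t) • A + t • B).PosSemidef :=
  (psd_smul hA (by linarith)).add (psd_smul hB h0)

lemma combo_norm_sq {E : Type*} [NormedAddCommGroup E] [InnerProductSpace ℝ E]
    (a b : E) (t : ℝ) :
    ‖(1 - t) • a + t • b‖ ^ 2 = (1 - t) * ‖a‖ ^ 2 + t * ‖b‖ ^ 2 - t * (1 - t) * ‖b - a‖ ^ 2 := by
  rw [norm_add_sq_real, norm_sub_sq_real, real_inner_smul_left, real_inner_smul_right,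
    norm_smul, norm_smul, real_inner_comm b a]
  rw [mul_pow, mul_pow, Real.norm_eq_abs, Real.norm_eq_abs, sq_abs, sq_abs]
  ring

lemma strong_min {d : ℕ} {ι : Type*} (γ lam : ℝ) (hγ : 0 < γ) (hlam : 0 < lam)
    (T : Finset ι) (H : ι → Matrix (Fin d) (Fin d) ℝ)
    (Ms M' : Matrix (Fin d) (Fin d) ℝ) (hMs : Ms.PosSemidef) (hM' : M'.PosSemidef)
    (hopt : ∀ M'' : Matrix (Fin d) (Fin d) ℝ, M''.PosSemidef →
      Pobj γ lam T H Ms ≤ Pobj γ lam T H M'') :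
    Pobj γ lam T H Ms + lam / 2 * ‖emb M' - emb Ms‖ ^ 2 ≤ Pobj γ lam T H M' := by
  set D := ‖emb M' - emb Ms‖ ^ 2 with hD
  have hDnn : 0 ≤ D := sq_nonneg _
  have step : ∀ t : ℝ, 0 < t → t ≤ 1 →
      Pobj γ lam T H Ms + lam / 2 * D - lam / 2 * (t * D) ≤ Pobj γ lam T H M' := by
    intro t ht0 ht1
    set Mt := (1 - t) • Ms + t • M' with hMt
    have hMtPSD : Mt.PosSemidef := psd_combo hMs hM' ht0.le ht1
    have hconv : Pobj γ lam T H Mt ≤ (1 - t) * Pobj γ lam T H Ms + t * Pobj γ lam T H M'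
        - lam / 2 * (t * (1 - t) * D) := by
      have hsum : ∀ s ∈ T, shinge γ (frob Mt (H s)) ≤
          (1 - t) * shinge γ (frob Ms (H s)) + t * shinge γ (frob M' (H s)) := by
        intro s _
        have hfr : frob Mt (H s) = (1 - t) * frob Ms (H s) + t * frob M' (H s) := by
          rw [frob_eq, frob_eq, frob_eq, hMt, emb_add, emb_smul, emb_smul,
            inner_add_left, real_inner_smul_left, real_inner_smul_left]
        rw [hfr]
        have h := (shinge_convex γ hγ).2 (Set.mem_univ (frob Ms (H s)))
          (Set.mem_univ (frob M' (H s))) (by linarith : (0:ℝ) ≤ 1 - t) ht0.le (by ring)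
        simpa [smul_eq_mul] using h
      have hsum_le : ∑ s ∈ T, shinge γ (frob Mt (H s)) ≤
          ∑ s ∈ T, ((1 - t) * shinge γ (frob Ms (H s)) + t * shinge γ (frob M' (H s))) :=
        Finset.sum_le_sum hsum
      rw [Finset.sum_add_distrib, ← Finset.mul_sum, ← Finset.mul_sum] at hsum_le
      have hnorm : frobNorm Mt ^ 2 = (1 - t) * frobNorm Ms ^ 2 + t * frobNorm M' ^ 2
          - t * (1 - t) * D := by
        rw [frobNorm_eq, frobNorm_eq, frobNorm_eq, hMt, emb_add, emb_smul, emb_smul,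
          combo_norm_sq]
      unfold Pobj
      rw [hnorm]
      linarith [hsum_le]
    have hm := hopt Mt hMtPSD
    have h4 : t * (Pobj γ lam T H Ms + lam / 2 * ((1 - t) * D)) ≤ t * Pobj γ lam T H M' := by
      linarith [hm, hconv]
    have h5 := (mul_le_mul_iff_right₀ ht0).mp h4
    have h6 : lam / 2 * ((1 - t) * D) = lam / 2 * D - lam / 2 * (t * D) := by ring
    linarith [h5, h6.symm.le]
  refine le_of_forall_pos_le_add ?_
  intro ε hε
  set t := min 1 (2 * ε / (lam * (D + 1))) with ht
  have htpos : 0 < t := lt_min one_pos (by positivity)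
  have ht1 : t ≤ 1 := min_le_left _ _
  have h := step t htpos ht1
  have hbound : lam / 2 * (t * D) ≤ ε := by
    have h1 : t ≤ 2 * ε / (lam * (D + 1)) := min_le_right _ _
    have h2 : lam / 2 * (t * D) ≤ lam / 2 * (2 * ε / (lam * (D + 1)) * D) :=
      mul_le_mul_of_nonneg_left (mul_le_mul_of_nonneg_right h1 hDnn) (by positivity)
    calc lam / 2 * (t * D) ≤ lam / 2 * (2 * ε / (lam * (D + 1)) * D) := h2
      _ = ε * (D / (D + 1)) := by field_simp
      _ ≤ ε * 1 := by
          apply mul_le_mul_of_nonneg_left _ hε.le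
          rw [div_le_one (by positivity)]; linarith
      _ = ε := mul_one ε
  linarith

set_option maxHeartbeats 2000000 in
/-- Range-based extension of RRPB. -/
theorem rrpb_range {d : ℕ} {ι : Type*} (γ lam0 : ℝ)
    (hγ : 0 < γ) (hγ1 : γ ≤ 1) (hlam0 : 0 < lam0)
    (T : Finset ι) (H : ι → Matrix (Fin d) (Fin d) ℝ)
    (hH : ∀ t ∈ T, (H t).IsSymm)
    (t0 : ι) (ht0 : t0 ∈ T) (hH0 : H t0 ≠ 0)
    (M0star M0 : Matrix (Fin d) (Fin d) ℝ) (ε : ℝ) (hε : 0 ≤ ε)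
    (hM0star : M0star.PosSemidef)
    (hopt0 : ∀ M' : Matrix (Fin d) (Fin d) ℝ, M'.PosSemidef →
      Pobj γ lam0 T H M0star ≤ Pobj γ lam0 T H M')
    (hM0 : M0.IsSymm) (happrox : frobNorm (M0star - M0) ≤ ε)
    (hpos : frob (H t0) M0 - 2 + frobNorm (H t0) * frobNorm M0 > 0) :
    let lamA := lam0 * (frobNorm M0 * frobNorm (H t0) - frob (H t0) M0 +
        2 * ε * frobNorm (H t0)) /
      (frob (H t0) M0 - 2 + frobNorm (H t0) * frobNorm M0)
    let lamB := lam0 * (frobNorm M0 * frobNorm (H t0) + frob (H t0) M0) /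
      (frobNorm (H t0) * frobNorm M0 - frob (H t0) M0 + 2 + 2 * ε * frobNorm (H t0))
    ∀ lam : ℝ, 0 < lam →
      ((lamA < lam ∧ lam ≤ lam0) ∨ (lam0 ≤ lam ∧ lam < lamB)) →
      ∀ Mlamstar : Matrix (Fin d) (Fin d) ℝ, Mlamstar.PosSemidef →
        (∀ M' : Matrix (Fin d) (Fin d) ℝ, M'.PosSemidef →
          Pobj γ lam T H Mlamstar ≤ Pobj γ lam T H M') →
        frob (H t0) Mlamstar > 1 := by
  intro lamA lamB lam hlam hcase Mlamstar hPSD hoptlam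
  -- abbreviations
  set h := emb (H t0) with hh
  set m0 := emb M0star with hm0
  set n0 := emb M0 with hn0
  set m := emb Mlamstar with hm
  set c : ℝ := frob (H t0) M0 with hcdef
  set b : ℝ := frobNorm M0 with hbdef
  set hn : ℝ := frobNorm (H t0) with hhndef
  have hc : c = (inner ℝ h n0 : ℝ) := frob_eq _ _
  have hb : b = ‖n0‖ := frobNorm_eq _
  have hhn : hn = ‖h‖ := frobNorm_eq _
  -- ‖h‖ > 0
  have hHpos : 0 < ‖h‖ := by
    rw [norm_pos_iff]
    intro hcon
    apply hH0
    ext i j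
    have : h (i, j) = 0 := by rw [hcon]; rfl
    simpa [hh, emb] using this
  -- approximation
  have hnrm : ‖m0 - n0‖ ≤ ε := by
    have := happrox
    rwa [frobNorm_eq, emb_sub] at this
  -- strong convexity at lam0 and lam
  have SC1 := strong_min γ lam0 hγ hlam0 T H M0star Mlamstar hM0star hPSD hopt0
  have SC2 := strong_min γ lam hγ hlam T H Mlamstar M0star hPSD hM0star hoptlam
  rw [show emb Mlamstar - emb M0star = m - m0 from rfl] at SC1
  rw [show emb M0star - emb Mlamstar = m0 - m from rfl, norm_sub_rev] at SC2
  have Pd1 : Pobj γ lam0 T H M0star =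
      Pobj γ lam T H M0star + (lam0 - lam) / 2 * ‖m0‖ ^ 2 := by
    unfold Pobj; rw [frobNorm_eq]; ring
  have Pd2 : Pobj γ lam0 T H Mlamstar =
      Pobj γ lam T H Mlamstar + (lam0 - lam) / 2 * ‖m‖ ^ 2 := by
    unfold Pobj; rw [frobNorm_eq]; ring
  have Eexp : ‖m - m0‖ ^ 2 = ‖m‖ ^ 2 - 2 * (inner ℝ m m0 : ℝ) + ‖m0‖ ^ 2 :=
    norm_sub_sq_real m m0
  have SC1' : Pobj γ lam T H M0star + (lam0 - lam) / 2 * ‖m0‖ ^ 2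
      + lam0 / 2 * ‖m - m0‖ ^ 2 ≤
      Pobj γ lam T H Mlamstar + (lam0 - lam) / 2 * ‖m‖ ^ 2 := by
    rw [Pd1, Pd2] at SC1
    linarith [SC1]
  have hsum0 : lam0 / 2 * ‖m - m0‖ ^ 2 + lam / 2 * ‖m - m0‖ ^ 2 ≤
      (lam0 - lam) / 2 * ‖m‖ ^ 2 - (lam0 - lam) / 2 * ‖m0‖ ^ 2 := by
    linarith [SC1', SC2]
  rw [Eexp] at hsum0
  have key : lam * ‖m‖ ^ 2 - (lam0 + lam) * (inner ℝ m m0 : ℝ) + lam0 * ‖m0‖ ^ 2 ≤ 0 := by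
    linarith [hsum0]
  -- the ball
  set v : EuclideanSpace ℝ (Fin d × Fin d) := (2 * lam) • m - (lam0 + lam) • m0 with hv
  have hv2 : ‖v‖ ^ 2 = (2 * lam) ^ 2 * ‖m‖ ^ 2
      - 2 * (2 * lam * ((lam0 + lam) * (inner ℝ m m0 : ℝ)))
      + (lam0 + lam) ^ 2 * ‖m0‖ ^ 2 := by
    rw [hv, norm_sub_sq_real, real_inner_smul_left, real_inner_smul_right,
      norm_smul, norm_smul, mul_pow, mul_pow, Real.norm_eq_abs, Real.norm_eq_abs,
      sq_abs, sq_abs]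
  have habs : (|lam0 - lam| * ‖m0‖) ^ 2 = (lam0 - lam) ^ 2 * ‖m0‖ ^ 2 := by
    rw [mul_pow, sq_abs]
  have hk4 : 4 * lam * (lam * ‖m‖ ^ 2 - (lam0 + lam) * (inner ℝ m m0 : ℝ)
      + lam0 * ‖m0‖ ^ 2) ≤ 4 * lam * 0 :=
    mul_le_mul_of_nonneg_left key (by linarith)
  have hsq : ‖v‖ ^ 2 ≤ (|lam0 - lam| * ‖m0‖) ^ 2 := by
    rw [hv2, habs]
    linarith [hk4]
  have hball : ‖v‖ ≤ |lam0 - lam| * ‖m0‖ := by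
    have hr : (0:ℝ) ≤ |lam0 - lam| * ‖m0‖ := by positivity
    calc ‖v‖ = Real.sqrt (‖v‖ ^ 2) := (Real.sqrt_sq (norm_nonneg v)).symm
      _ ≤ Real.sqrt ((|lam0 - lam| * ‖m0‖) ^ 2) := Real.sqrt_le_sqrt hsq
      _ = |lam0 - lam| * ‖m0‖ := Real.sqrt_sq hr
  -- Cauchy–Schwarz steps
  have hCS1 : |(inner ℝ h v : ℝ)| ≤ ‖h‖ * ‖v‖ := abs_real_inner_le_norm h v
  have hinner_v : (inner ℝ h v : ℝ) = 2 * lam * (inner ℝ h m : ℝ)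
      - (lam0 + lam) * (inner ℝ h m0 : ℝ) := by
    rw [hv, inner_sub_right, real_inner_smul_right, real_inner_smul_right]
  have hI : 2 * lam * (inner ℝ h m : ℝ) ≥ (lam0 + lam) * (inner ℝ h m0 : ℝ)
      - ‖h‖ * (|lam0 - lam| * ‖m0‖) := by
    have h1 : -(‖h‖ * ‖v‖) ≤ (inner ℝ h v : ℝ) := neg_le_of_abs_le hCS1
    have h2 : ‖h‖ * ‖v‖ ≤ ‖h‖ * (|lam0 - lam| * ‖m0‖) :=
      mul_le_mul_of_nonneg_left hball (norm_nonneg h)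
    rw [hinner_v] at h1
    linarith
  have hCS2 : (inner ℝ h m0 : ℝ) ≥ c - ‖h‖ * ε := by
    have h1 : |(inner ℝ h (m0 - n0) : ℝ)| ≤ ‖h‖ * ‖m0 - n0‖ := abs_real_inner_le_norm _ _
    have h2 : ‖h‖ * ‖m0 - n0‖ ≤ ‖h‖ * ε := mul_le_mul_of_nonneg_left hnrm (norm_nonneg h)
    have h3 : -(‖h‖ * ε) ≤ (inner ℝ h (m0 - n0) : ℝ) := by
      have := neg_le_of_abs_le h1; linarith
    rw [inner_sub_right] at h3
    rw [hc]
    linarith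
  have htri : ‖m0‖ ≤ b + ε := by
    have h1 : ‖m0‖ - ‖n0‖ ≤ ‖m0 - n0‖ := norm_sub_norm_le m0 n0
    rw [hb]
    linarith
  have hCS3 : c ≤ ‖h‖ * ‖n0‖ := by rw [hc]; exact real_inner_le_norm h n0
  -- combined inequality
  have hA1 : (lam0 + lam) * (inner ℝ h m0 : ℝ) ≥ (lam0 + lam) * (c - ‖h‖ * ε) :=
    mul_le_mul_of_nonneg_left hCS2 (by linarith)
  have hA2 : ‖h‖ * (|lam0 - lam| * ‖m0‖) ≤ ‖h‖ * (|lam0 - lam| * (b + ε)) := by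
    apply mul_le_mul_of_nonneg_left _ (norm_nonneg h)
    exact mul_le_mul_of_nonneg_left htri (abs_nonneg _)
  have hI2 : 2 * lam * (inner ℝ h m : ℝ) ≥ (lam0 + lam) * (c - ‖h‖ * ε)
      - ‖h‖ * (|lam0 - lam| * (b + ε)) := by linarith
  -- finish: goal in terms of inner product
  rw [show frob (H t0) Mlamstar = (inner ℝ h m : ℝ) from frob_eq _ _]
  have hfinal : 2 * lam * 1 < 2 * lam * (inner ℝ h m : ℝ) := by
    rcases hcase with ⟨h1, h2⟩ | ⟨h1, h2⟩
    · -- lamA < lam ≤ lam0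
      have habs' : |lam0 - lam| = lam0 - lam := abs_of_nonneg (by linarith)
      have hden : 0 < c - 2 + hn * b := hpos
      have h1' : lam0 * (b * hn - c + 2 * ε * hn) < lam * (c - 2 + hn * b) := by
        have := h1
        rw [show lamA = lam0 * (b * hn - c + 2 * ε * hn) / (c - 2 + hn * b) from rfl] at this
        exact (div_lt_iff₀ hden).mp this
      rw [habs'] at hI2
      rw [hhn] at h1'
      linarith [hI2, h1']
    · -- lam0 ≤ lam < lamB
      have habs' : |lam0 - lam| = lam - lam0 := by
        rw [abs_of_nonpos (by linarith)]; ring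
      have hdenB : 0 < hn * b - c + 2 + 2 * ε * hn := by
        rw [hhn, hb]
        have hεh : 0 ≤ ε * ‖h‖ := mul_nonneg hε (norm_nonneg h)
        linarith [hCS3, hεh]
      have h2' : lam * (hn * b - c + 2 + 2 * ε * hn) < lam0 * (b * hn + c) := by
        have := h2
        rw [show lamB = lam0 * (b * hn + c) / (hn * b - c + 2 + 2 * ε * hn) from rfl] at this
        exact (lt_div_iff₀ hdenB).mp this
      rw [habs'] at hI2
      rw [hhn] at h2'
      linarith [hI2, h2']
  have := (mul_lt_mul_iff_right₀ (by linarith : (0:ℝ) < 2 * lam)).mp hfinal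
  linarith
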